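/- Let (C, D_C, ev) and (D, D_D, ev) be categories with duality, where D is an abelian category and the functor D_D : Dᵒᵖ → D sends epimorphisms of D to monomorphisms. Let E, F, G : C → D be functors, let π : E → F be a natural transformation all of whose components are epimorphisms, let ι : F → G be a natural transformation all of whose components are monomorphisms, and set α = ι ∘ π : E → G. Let β : G ∘ D_C → D_D ∘ Eᵒᵖ be a natural transformation such that the composite E ∘ D_C → G ∘ D_C → D_D ∘ Eᵒᵖ (α whiskered with D_C, followed by β) is a symmetric form transformation. Let γ : F ∘ D_C → D_D ∘ Fᵒᵖ be a natural transformation such that for every object A the square commutes: γ_A followed by D_D(π_A) equals ι_{D_C A} followed by β_A. Then γ is symmetric, i.e. γ = γ^T. -/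

import Mathlib

open CategoryTheory Opposite

/-- A category with duality: a functor `D : Cᵒᵖ ⥤ C` together with an evaluation
natural transformation `ev : 𝟭 C ⟶ D.rightOp ⋙ D` such that the composite
`D A → D D D A → D A` (namely `ev_{D A}` followed by `D (ev_A)`) is the identity. -/
structure CatWithDuality (C : Type*) [Category C] where
  D : Cᵒᵖ ⥤ C
  ev : 𝟭 C ⟶ D.rightOp ⋙ D
  ev_comp : ∀ A : C, ev.app (D.obj (op A)) ≫ D.map (ev.app A).op = 𝟙 (D.obj (op A))

/-- The transpose `g^T : A ⟶ D B` of a morphism `g : B ⟶ D A`, namely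
`ev_A` followed by `D g`. -/
def CatWithDuality.transpose {C : Type*} [Category C] (S : CatWithDuality C)
    {A B : C} (g : B ⟶ S.D.obj (op A)) : A ⟶ S.D.obj (op B) :=
  S.ev.app A ≫ S.D.map g.op

/-- The transpose `β^T : F ∘ D_C ⟶ D_D ∘ Gᵒᵖ` of a natural transformation
`β : G ∘ D_C ⟶ D_D ∘ Fᵒᵖ`; its component at `A` is
`ev_{F (D_C A)}` followed by `D_D (β_{D_C A})` followed by `D_D (G (ev_A))`. -/
def natTranspose {C : Type*} [Category C] {D : Type*} [Category D]
    (SC : CatWithDuality C) (SD : CatWithDuality D)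
    {F G : C ⥤ D} (β : SC.D ⋙ G ⟶ F.op ⋙ SD.D) :
    SC.D ⋙ F ⟶ G.op ⋙ SD.D where
  app X := SD.ev.app (F.obj (SC.D.obj X)) ≫
    SD.D.map (β.app (op (SC.D.obj X))).op ≫
    SD.D.map (G.map (SC.ev.app X.unop)).op
  naturality := by
    intro X Y f
    dsimp
    have h1 := SD.ev.naturality (F.map (SC.D.map f))
    dsimp at h1
    rw [reassoc_of% h1]
    simp only [Functor.rightOp_map, ← Functor.map_comp, ← op_comp, Category.assoc]
    congr 2
    congr 1
    have h3 := β.naturality ((SC.D.map f).op)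
    dsimp at h3
    rw [← h3]
    have h4 := SC.ev.naturality f.unop
    dsimp at h4
    rw [← Category.assoc, ← Functor.map_comp, ← h4, Functor.map_comp, Category.assoc]

/-- Let `(C, D_C, ev)` and `(D, D_D, ev)` be categories with duality, `D` abelian,
and suppose `D_D` sends epimorphisms to monomorphisms.  Let `E, F, G : C ⥤ D`,
let `π : E ⟶ F` have epimorphic components and `ι : F ⟶ G` have monomorphic
components, and set `α = ι ∘ π`.  Let `β : G ∘ D_C ⟶ D_D ∘ Eᵒᵖ` be such that the
composite `E ∘ D_C → G ∘ D_C → D_D ∘ Eᵒᵖ` is symmetric, and let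
`γ : F ∘ D_C ⟶ D_D ∘ Fᵒᵖ` satisfy `γ_A ≫ D_D(π_A) = ι_{D_C A} ≫ β_A` for all `A`.
Then `γ` is symmetric. -/
theorem image_form_symmetric
    {C : Type*} [Category C] {D : Type*} [Category D] [Abelian D]
    (SC : CatWithDuality C) (SD : CatWithDuality D)
    (hDD : ∀ {X Y : D} (f : X ⟶ Y), Epi f → Mono (SD.D.map f.op))
    (E F G : C ⥤ D) (π : E ⟶ F) (ι : F ⟶ G)
    (hπ : ∀ A : C, Epi (π.app A)) (hι : ∀ A : C, Mono (ι.app A))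
    (β : SC.D ⋙ G ⟶ E.op ⋙ SD.D)
    (hsym : Functor.whiskerLeft SC.D (π ≫ ι) ≫ β =
      natTranspose SC SD (Functor.whiskerLeft SC.D (π ≫ ι) ≫ β))
    (γ : SC.D ⋙ F ⟶ F.op ⋙ SD.D)
    (hγ : ∀ A : C, γ.app (op A) ≫ SD.D.map (π.app A).op =
      ι.app (SC.D.obj (op A)) ≫ β.app (op A)) :
    γ = natTranspose SC SD γ := by
  ext X
  have hmono := hDD (π.app X.unop) (hπ X.unop)
  have hepi := hπ (SC.D.obj X)
  rw [← cancel_mono (SD.D.map (π.app X.unop).op), ← cancel_epi (π.app (SC.D.obj X))]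
  have h1 := hγ X.unop
  have h2 := hγ (SC.D.obj X)
  have hs := congrArg (fun t => t.app X) hsym
  simp only [NatTrans.comp_app, Functor.whiskerLeft_app, natTranspose] at hs
  dsimp at hs ⊢
  simp only [op_unop] at h1 h2 hs
  simp only [Category.assoc, ← op_comp] at hs
  rw [← h2] at hs
  simp only [op_comp, Functor.map_comp, Category.assoc] at hs
  have hn := SD.ev.naturality (π.app (SC.D.obj X))
  dsimp at hn
  rw [← reassoc_of% hn] at hs
  replace hs := (cancel_epi (π.app (SC.D.obj X))).mp hs
  have hp := π.naturality (SC.ev.app X.unop)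
  dsimp at hp
  simp only [← Functor.map_comp, ← op_comp] at hs
  rw [hp] at hs
  simp only [op_comp, Functor.map_comp, Category.assoc] at hs
  rw [h1, hs]
  simp [natTranspose]
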